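/- In the free group F₂ with generating set S_γ: if g ∈ F₂ has a geodesic spelling whose first three letters are b, a, a, then g has no geodesic spelling whose first letter is a⁻¹. Similarly, if g′ ∈ F₂ has a geodesic spelling whose first three letters are b⁻¹, a⁻¹, a⁻¹, then g′ has no geodesic spelling whose first letter is a. -/

import Mathlib

section Defs

variable {G : Type*} [Group G]

/-- Word length with respect to a generating set `S`: the least `n` such that `g`
is a product of `n` elements of `S`. -/
noncomputable def wlen (S : Set G) (g : G) : ℕ :=
  sInf {n | ∃ l : List G, (∀ x ∈ l, x ∈ S) ∧ l.length = n ∧ l.prod = g}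

/-- Word metric: `d(g,h) = |h⁻¹ g|`. -/
noncomputable def wdist (S : Set G) (x y : G) : ℝ := wlen S (y⁻¹ * x)

/-- Gromov product `(x,y)_w = ½ (d(x,w) + d(w,y) − d(x,y))`. -/
noncomputable def gp (S : Set G) (x y w : G) : ℝ :=
  (wdist S x w + wdist S w y - wdist S x y) / 2

/-- The word metric is `δ`-hyperbolic (Gromov's four-point condition). -/
def IsDeltaHyperbolic (S : Set G) (δ : ℝ) : Prop :=
  ∀ x y z w : G, gp S x y w ≥ min (gp S x z w) (gp S y z w) - δ

/-- A group is virtually cyclic if it has a cyclic subgroup of finite index. -/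
def VirtuallyCyclic (G : Type*) [Group G] : Prop :=
  ∃ H : Subgroup G, IsCyclic H ∧ H.FiniteIndex

/-- `GenCon(g)`: the average word length of the conjugates of `g`
by the generators in `S`. -/
noncomputable def genCon (S : Set G) (g : G) : ℝ :=
  (∑ᶠ s ∈ S, (wlen S (s⁻¹ * g * s) : ℝ)) / S.ncard

/-- Conjugation curvature `κ(g) = (|g| − GenCon(g)) / |g|`. -/
noncomputable def kappa (S : Set G) (g : G) : ℝ :=
  ((wlen S g : ℝ) - genCon S g) / (wlen S g)

/-- `k`-spherical conjugation curvature
`κ_k(g) = (|g| − (1/#S_k) Σ_{s ∈ S_k} d(gs,s)) / |g|`; note `d(gs,s) = |s⁻¹ g s|`. -/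
noncomputable def kappaK (S : Set G) (k : ℕ) (g : G) : ℝ :=
  ((wlen S g : ℝ) -
      (∑ᶠ s ∈ {x : G | wlen S x = k}, (wlen S (s⁻¹ * g * s) : ℝ)) /
        ({x : G | wlen S x = k} : Set G).ncard) / (wlen S g)

end Defs

/-- The free group of rank 2. -/
abbrev F2 := FreeGroup Bool

namespace F2Gen

/-- The generator `a`. -/
def a : F2 := FreeGroup.of true

/-- The generator `b`. -/
def b : F2 := FreeGroup.of false

end F2Gen

open F2Gen

/-- The word `w = ababa`. -/
def wγ : F2 := a * b * a * b * a

/-- The generating set `S_γ = {a, a⁻¹, b, b⁻¹, w, w⁻¹}` of `F₂`. -/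
def Sγ : Set F2 := {a, a⁻¹, b, b⁻¹, wγ, wγ⁻¹}


namespace BDA

abbrev Λ := Bool × Bool

def la : Λ := (true, true)
def lA : Λ := (true, false)
def lb : Λ := (false, true)
def lB : Λ := (false, false)

def isF4 (u : List Λ) : Prop :=
  u = [la,lb,la,lb] ∨ u = [lb,la,lb,la] ∨ u = [lA,lB,lA,lB] ∨ u = [lB,lA,lB,lA]

def isF5 (u : List Λ) : Prop :=
  u = [la,lb,la,lb,la] ∨ u = [lA,lB,lA,lB,lA]

instance (u : List Λ) : Decidable (isF4 u) := by unfold isF4; infer_instance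
instance (u : List Λ) : Decidable (isF5 u) := by unfold isF5; infer_instance

def P : List Λ → ℕ
  | [] => 0
  | c :: t =>
    max (P t) (max
      (if isF4 (c :: t.take 3) then 1 + P (t.drop 3) else 0)
      (if isF5 (c :: t.take 4) then 2 + P (t.drop 4) else 0))
termination_by u => u.length
decreasing_by
  all_goals (simp only [List.length_cons, List.length_drop]; omega)

lemma P_cons (c : Λ) (t : List Λ) : P (c :: t) =
    max (P t) (max
      (if isF4 (c :: t.take 3) then 1 + P (t.drop 3) else 0)
      (if isF5 (c :: t.take 4) then 2 + P (t.drop 4) else 0)) := by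
  rw [P]

lemma P_le_cons (c : Λ) (t : List Λ) : P t ≤ P (c :: t) := by
  rw [P_cons]; exact le_max_left _ _

lemma P_drop (k : ℕ) (u : List Λ) : P (u.drop k) ≤ P u := by
  induction u generalizing k with
  | nil => simp
  | cons c t ih =>
    cases k with
    | zero => simp
    | succ k => simpa using le_trans (ih k) (P_le_cons c t)

lemma P_ge_F4 (u : List Λ) (h : isF4 (u.take 4)) : 1 + P (u.drop 4) ≤ P u := by
  cases u with
  | nil => simp [isF4] at h
  | cons c t =>
    rw [P_cons]
    have h' : isF4 (c :: t.take 3) := by simpa using h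
    calc 1 + P (List.drop 4 (c :: t)) =
        (if isF4 (c :: t.take 3) then 1 + P (t.drop 3) else 0) := by
          rw [if_pos h']; simp
      _ ≤ _ := le_max_of_le_right (le_max_left _ _)

lemma P_ge_F5 (u : List Λ) (h : isF5 (u.take 5)) : 2 + P (u.drop 5) ≤ P u := by
  cases u with
  | nil => simp [isF5] at h
  | cons c t =>
    rw [P_cons]
    have h' : isF5 (c :: t.take 4) := by simpa using h
    calc 2 + P (List.drop 5 (c :: t)) =
        (if isF5 (c :: t.take 4) then 2 + P (t.drop 4) else 0) := by
          rw [if_pos h']; simp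
      _ ≤ _ := le_max_of_le_right (le_max_right _ _)

lemma P_cons_le (c : Λ) (t : List Λ) : P (c :: t) ≤ P t + 1 := by
  rw [P_cons]
  refine max_le (by omega) (max_le ?_ ?_)
  · split
    · have := P_drop 3 t; omega
    · omega
  · split
    · next h5 =>
      have h4 : isF4 (t.take 4) := by
        rcases h5 with h | h <;> (simp only [List.cons.injEq] at h; simp [isF4, h.2])
      have h6 := P_ge_F4 t h4
      omega
    · omega



lemma P_skip (c : Λ) (t : List Λ) (h4 : ¬ isF4 (c :: t.take 3))
    (h5 : ¬ isF5 (c :: t.take 4)) : P (c :: t) = P t := by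
  rw [P_cons, if_neg h4, if_neg h5]; simp

lemma P_br (c : Λ) (t : List Λ) :
    P (c::t) ≤ max (P t) (max (1 + P (t.drop 3)) (2 + P (t.drop 4))) := by
  rw [P_cons]
  refine max_le (le_max_left _ _) (max_le ?_ ?_)
  · split
    · exact le_max_of_le_right (le_max_left _ _)
    · exact Nat.zero_le _
  · split
    · exact le_max_of_le_right (le_max_right _ _)
    · exact Nat.zero_le _

lemma P_br5 (c : Λ) (t : List Λ) (h5 : ¬ isF5 (c :: t.take 4)) :
    P (c::t) ≤ max (P t) (1 + P (t.drop 3)) := by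
  rw [P_cons, if_neg h5]
  refine max_le (le_max_left _ _) (max_le ?_ ?_)
  · split
    · exact le_max_right _ _
    · exact Nat.zero_le _
  · exact Nat.zero_le _

lemma Pba (L : List Λ) : P (lb::la::L) ≤ P L + 1 := by
  have h0 := P_br5 lb (la::L) (by simp [isF5, la, lb, lA, lB])
  simp only [show List.drop 3 (la::L) = List.drop 2 L from rfl] at h0
  have h1 := P_cons_le la L
  have h2 := P_drop 2 L
  omega

lemma Pab (L : List Λ) : P (la::lb::L) ≤ P L + 2 :=
  le_trans (P_cons_le _ _) (by have := P_cons_le lb L; omega)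

lemma Paba (L : List Λ) : P (la::lb::la::L) ≤ P L + 2 := by
  have h0 := P_br la (lb::la::L)
  simp only [show List.drop 3 (lb::la::L) = List.drop 1 L from rfl,
    show List.drop 4 (lb::la::L) = List.drop 2 L from rfl] at h0
  have h1 := Pba L
  have h2 := P_drop 1 L
  have h3 := P_drop 2 L
  omega

lemma Pbab (L : List Λ) : P (lb::la::lb::L) ≤ P L + 2 := by
  have h0 := P_br5 lb (la::lb::L) (by simp [isF5, la, lb, lA, lB])
  simp only [show List.drop 3 (la::lb::L) = List.drop 1 L from rfl] at h0
  have h1 := Pab L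
  have h2 := P_drop 1 L
  omega

lemma Pbaba (L : List Λ) : P (lb::la::lb::la::L) ≤ P L + 2 := by
  have h0 := P_br5 lb (la::lb::la::L) (by simp [isF5, la, lb, lA, lB])
  simp only [show List.drop 3 (la::lb::la::L) = L from rfl] at h0
  have h1 := Paba L
  omega

lemma Pabab (L : List Λ) : P (la::lb::la::lb::L) ≤ P L + 2 := by
  have h0 := P_br la (lb::la::lb::L)
  simp only [show List.drop 3 (lb::la::lb::L) = L from rfl,
    show List.drop 4 (lb::la::lb::L) = List.drop 1 L from rfl] at h0
  have h1 := Pbab L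
  have h2 := P_drop 1 L
  omega

lemma Pababa (L : List Λ) : P (la::lb::la::lb::la::L) ≤ P L + 2 := by
  have h0 := P_br la (lb::la::lb::la::L)
  simp only [show List.drop 3 (lb::la::lb::la::L) = la::L from rfl,
    show List.drop 4 (lb::la::lb::la::L) = L from rfl] at h0
  have h1 := Pbaba L
  have h2 := P_cons_le la L
  omega

lemma Pbaa_eq (L : List Λ) : P (lb::la::la::L) = P (la::L) := by
  rw [P_skip, P_skip]
  · simp [isF4, la, lb, lA, lB]
  · simp [isF5, la, lb, lA, lB]
  · simp [isF4, la, lb, lA, lB]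
  · simp [isF5, la, lb, lA, lB]

lemma Pabaa_eq (L : List Λ) : P (la::lb::la::la::L) = P (la::L) := by
  rw [P_skip, Pbaa_eq]
  · simp [isF4, la, lb, lA, lB]
  · simp [isF5, la, lb, lA, lB]

lemma Pbal_eq (L : List Λ) : P (lb::la::lB::L) = P (lB::L) := by
  rw [P_skip, P_skip]
  · simp [isF4, la, lb, lA, lB]
  · simp [isF5, la, lb, lA, lB]
  · simp [isF4, la, lb, lA, lB]
  · simp [isF5, la, lb, lA, lB]

lemma Pabal_eq (L : List Λ) : P (la::lb::la::lB::L) = P (lB::L) := by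
  rw [P_skip, Pbal_eq]
  · simp [isF4, la, lb, lA, lB]
  · simp [isF5, la, lb, lA, lB]

lemma PA_eq (L : List Λ) (h : L.head? ≠ some lB) : P (lA::L) = P L := by
  rcases L with _ | ⟨⟨cb, cs⟩, t⟩
  · rw [P_skip] <;> simp [isF4, isF5, la, lb, lA, lB]
  · refine P_skip _ _ ?_ ?_ <;>
      cases cb <;> cases cs <;> simp_all [isF4, isF5, la, lb, lA, lB]

lemma PAA_eq (L : List Λ) (h : L.head? ≠ some lB) : P (lA::lA::L) = P L := by
  rw [P_skip, PA_eq L h]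
  · simp [isF4, la, lb, lA, lB]
  · simp [isF5, la, lb, lA, lB]

lemma PAAB_le (L : List Λ) : P (lA::lA::lB::L) ≤ P L + 2 := by
  have e : P (lA::lA::lB::L) = P (lA::lB::L) := by
    rw [P_skip]
    · simp [isF4, la, lb, lA, lB]
    · simp [isF5, la, lb, lA, lB]
  rw [e]
  have h0 := P_br lA (lB::L)
  simp only [show List.drop 3 (lB::L) = List.drop 2 L from rfl,
    show List.drop 4 (lB::L) = List.drop 3 L from rfl] at h0
  have h1 := P_br5 lB L (by simp [isF5, la, lb, lA, lB])
  have h2 := P_drop 2 L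
  have h3 := P_drop 3 L
  have h4 := P_drop 3 L
  omega

lemma PABAB_ge (L : List Λ) : 1 + P L ≤ P (lA::lB::lA::lB::L) := by
  have := P_ge_F4 (lA::lB::lA::lB::L) (by simp [isF4])
  simpa using this

lemma PABABA_ge (L : List Λ) : 2 + P L ≤ P (lA::lB::lA::lB::lA::L) := by
  have := P_ge_F5 (lA::lB::lA::lB::lA::L) (by simp [isF5])
  simpa using this

lemma Pa_eq (L : List Λ) (h : L.head? ≠ some lb) : P (la::L) = P L := by
  rcases L with _ | ⟨⟨cb, cs⟩, t⟩
  · rw [P_skip] <;> simp [isF4, isF5, la, lb, lA, lB]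
  · refine P_skip _ _ ?_ ?_ <;>
      cases cb <;> cases cs <;> simp_all [isF4, isF5, la, lb, lA, lB]

lemma Pb_eq (L : List Λ) (h : L.head? ≠ some la) : P (lb::L) = P L := by
  rcases L with _ | ⟨⟨cb, cs⟩, t⟩
  · rw [P_skip] <;> simp [isF4, isF5, la, lb, lA, lB]
  · refine P_skip _ _ ?_ ?_ <;>
      cases cb <;> cases cs <;> simp_all [isF4, isF5, la, lb, lA, lB]

lemma Pab_eq (L : List Λ) (h : L.head? ≠ some la) : P (la::lb::L) = P L := by
  have e2 : P (lb::L) = P L := Pb_eq L h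
  rcases L with _ | ⟨⟨cb, cs⟩, t⟩
  · rw [P_skip, e2] <;> simp [isF4, isF5, la, lb, lA, lB]
  · rw [show P (la::lb::(cb,cs)::t) = P (lb::(cb,cs)::t) from ?_, e2]
    refine P_skip _ _ ?_ ?_ <;>
      cases cb <;> cases cs <;> simp_all [isF4, isF5, la, lb, lA, lB]

lemma Paba_eq (L : List Λ) (h : L.head? ≠ some lb) : P (la::lb::la::L) = P L := by
  have e1 : P (la::L) = P L := Pa_eq L h
  have e2 : P (lb::la::L) = P (la::L) := by
    rcases L with _ | ⟨⟨cb, cs⟩, t⟩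
    · rw [P_skip] <;> simp [isF4, isF5, la, lb, lA, lB]
    · refine P_skip _ _ ?_ ?_ <;>
        cases cb <;> cases cs <;> simp_all [isF4, isF5, la, lb, lA, lB]
  have e3 : P (la::lb::la::L) = P (lb::la::L) := by
    rcases L with _ | ⟨⟨cb, cs⟩, t⟩
    · rw [P_skip] <;> simp [isF4, isF5, la, lb, lA, lB]
    · refine P_skip _ _ ?_ ?_ <;>
        cases cb <;> cases cs <;> simp_all [isF4, isF5, la, lb, lA, lB]
  rw [e3, e2, e1]

end BDA


namespace BDA
open FreeGroup

lemma a_def : (a : F2) = FreeGroup.mk [la] := rfl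
lemma b_def : (b : F2) = FreeGroup.mk [lb] := rfl
lemma ainv_def : (a⁻¹ : F2) = FreeGroup.mk [lA] := by
  rw [a_def, FreeGroup.inv_mk]; rfl
lemma binv_def : (b⁻¹ : F2) = FreeGroup.mk [lB] := by
  rw [b_def, FreeGroup.inv_mk]; rfl

lemma toWord_smul_nil (c : Bool) (s : Bool) (x : F2) (h : x.toWord = []) :
    (FreeGroup.mk [(c,s)] * x).toWord = [(c,s)] := by
  conv_lhs => rw [← FreeGroup.mk_toWord (x := x), FreeGroup.mul_mk]
  rw [List.singleton_append, FreeGroup.toWord_mk, FreeGroup.reduce.cons,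
    FreeGroup.reduce_toWord, h]

lemma toWord_smul_cons (c : Bool) (s : Bool) (y : Λ) (t : List Λ) (x : F2)
    (h : x.toWord = y :: t) :
    (FreeGroup.mk [(c,s)] * x).toWord =
      if c = y.1 ∧ s = !y.2 then t else (c,s) :: y :: t := by
  conv_lhs => rw [← FreeGroup.mk_toWord (x := x), FreeGroup.mul_mk]
  rw [List.singleton_append, FreeGroup.toWord_mk, FreeGroup.reduce.cons,
    FreeGroup.reduce_toWord, h]

lemma toWord_reduced_pair (x : F2) (L1 L2 : List Λ) (c : Bool) (s : Bool)
    (h : x.toWord = L1 ++ (c, s) :: (c, !s) :: L2) : False := by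
  have h2 : FreeGroup.reduce (α := Bool) x.toWord = L1 ++ (c, s) :: (c, !s) :: L2 := by
    rw [FreeGroup.reduce_toWord]; exact h
  exact FreeGroup.reduce.not h2

end BDA

namespace BDA
open FreeGroup

lemma S_mem_a : (a : F2) ∈ Sγ := by simp [Sγ]
lemma S_mem_ainv : (a⁻¹ : F2) ∈ Sγ := by simp [Sγ]
lemma S_mem_b : (b : F2) ∈ Sγ := by simp [Sγ]
lemma S_mem_binv : (b⁻¹ : F2) ∈ Sγ := by simp [Sγ]
lemma S_mem_w : (wγ : F2) ∈ Sγ := by simp [Sγ]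
lemma S_mem_winv : (wγ⁻¹ : F2) ∈ Sγ := by simp [Sγ]

lemma S_inv {s : F2} (hs : s ∈ Sγ) : s⁻¹ ∈ Sγ := by
  rcases hs with h | h | h | h | h | h <;> subst h <;> simp [Sγ]

lemma mk_single_mem (y : Λ) : FreeGroup.mk [y] ∈ Sγ := by
  rcases y with ⟨c, s⟩
  cases c <;> cases s
  · exact binv_def ▸ S_mem_binv
  · exact b_def ▸ S_mem_b
  · exact ainv_def ▸ S_mem_ainv
  · exact a_def ▸ S_mem_a

lemma exists_spelling_list (L : List Λ) :
    ∃ l : List F2, (∀ x ∈ l, x ∈ Sγ) ∧ l.length = L.length ∧ l.prod = FreeGroup.mk L := by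
  induction L with
  | nil => exact ⟨[], by simp, by simp, by rw [List.prod_nil, FreeGroup.one_eq_mk]⟩
  | cons y t ih =>
    obtain ⟨l, hS, hlen, hprod⟩ := ih
    refine ⟨FreeGroup.mk [y] :: l, ?_, by simp [hlen], ?_⟩
    · intro x hx
      rcases List.mem_cons.mp hx with h | h
      · exact h ▸ mk_single_mem y
      · exact hS x h
    · rw [List.prod_cons, hprod, FreeGroup.mul_mk]; rfl

lemma wlen_set_nonempty (x : F2) :
    {n | ∃ l : List F2, (∀ s ∈ l, s ∈ Sγ) ∧ l.length = n ∧ l.prod = x}.Nonempty := by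
  obtain ⟨l, hS, hlen, hprod⟩ := exists_spelling_list x.toWord
  exact ⟨l.length, l, hS, rfl, by rw [hprod, FreeGroup.mk_toWord]⟩

lemma wlen_spec (x : F2) :
    ∃ l : List F2, (∀ s ∈ l, s ∈ Sγ) ∧ l.length = wlen Sγ x ∧ l.prod = x :=
  Nat.sInf_mem (wlen_set_nonempty x)

lemma wlen_le {x : F2} {l : List F2} (hS : ∀ s ∈ l, s ∈ Sγ) (hprod : l.prod = x) :
    wlen Sγ x ≤ l.length :=
  Nat.sInf_le ⟨l, hS, rfl, hprod⟩

lemma wlen_mul_le (x y : F2) : wlen Sγ (x * y) ≤ wlen Sγ x + wlen Sγ y := by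
  obtain ⟨l1, h1, e1, p1⟩ := wlen_spec x
  obtain ⟨l2, h2, e2, p2⟩ := wlen_spec y
  have : wlen Sγ (x * y) ≤ (l1 ++ l2).length := by
    refine wlen_le ?_ ?_
    · intro s hs; rcases List.mem_append.mp hs with h | h
      · exact h1 s h
      · exact h2 s h
    · rw [List.prod_append, p1, p2]
  simpa [e1, e2] using this

lemma wlen_S_le {s : F2} (hs : s ∈ Sγ) : wlen Sγ s ≤ 1 :=
  wlen_le (l := [s]) (by simpa using hs) (by simp)

def psi (x : F2) : ℤ := x.toWord.length - 2 * P x.toWord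

lemma P_nil : P ([] : List Λ) = 0 := by rw [P]

lemma P_single (y : Λ) : P [y] = 0 := by
  rw [P_cons]; simp [isF4, isF5, P_nil]

lemma psi_one : psi 1 = 0 := by
  simp [psi, FreeGroup.toWord_one, P_nil]

lemma psi_letter (c s : Bool) (x : F2) :
    psi x - 1 ≤ psi (FreeGroup.mk [(c,s)] * x) ∧
    psi (FreeGroup.mk [(c,s)] * x) ≤ psi x + 1 := by
  rcases h : x.toWord with _ | ⟨y, t⟩
  · have e := toWord_smul_nil c s x h
    simp only [psi, e, h]
    simp [P_single, P_nil]
  · have e := toWord_smul_cons c s y t x h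
    simp only [psi, e, h]
    split
    · have h1 := P_cons_le y t
      have h2 := P_le_cons y t
      simp only [List.length_cons]
      push_cast
      omega
    · have h1 := P_cons_le (c,s) (y::t)
      have h2 := P_le_cons (c,s) (y::t)
      simp only [List.length_cons]
      push_cast
      omega

end BDA

namespace BDA
open FreeGroup

def lflip (y : Λ) : Λ := (y.1, !y.2)

lemma cond_iff (c s : Bool) (z : Λ) : (c = z.1 ∧ s = !z.2) ↔ z = (c, !s) := by
  rcases z with ⟨z1, z2⟩; cases z1 <;> cases z2 <;> cases c <;> cases s <;> simp

lemma step_nil (y : Λ) (x : F2) (h : x.toWord = []) :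
    (FreeGroup.mk [y] * x).toWord = [y] := by
  obtain ⟨c, s⟩ := y; exact toWord_smul_nil c s x h

lemma step_cons (y z : Λ) (t : List Λ) (x : F2) (h : x.toWord = z :: t)
    (hne : z ≠ lflip y) : (FreeGroup.mk [y] * x).toWord = y :: z :: t := by
  obtain ⟨c, s⟩ := y
  rw [toWord_smul_cons c s z t x h, if_neg]
  rw [cond_iff]; exact hne

lemma step_cancel (y : Λ) (t : List Λ) (x : F2) (h : x.toWord = lflip y :: t) :
    (FreeGroup.mk [y] * x).toWord = t := by
  obtain ⟨c, s⟩ := y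
  rw [toWord_smul_cons c s _ t x h, if_pos]
  rw [cond_iff]; rfl

lemma wγ_mul (x : F2) : wγ * x =
    FreeGroup.mk [la] * (FreeGroup.mk [lb] * (FreeGroup.mk [la] *
      (FreeGroup.mk [lb] * (FreeGroup.mk [la] * x)))) := by
  rw [wγ]
  simp only [← a_def, ← b_def, mul_assoc]

lemma psi_w (x : F2) : psi x - 1 ≤ psi (wγ * x) := by
  rw [wγ_mul x]
  rcases h0 : x.toWord with _ | ⟨y1, L1⟩
  · -- empty word
    have e1 := step_nil la x h0
    have e2 := step_cons lb la [] _ e1 (by decide)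
    have e3 := step_cons la lb [la] _ e2 (by decide)
    have e4 := step_cons lb la [lb,la] _ e3 (by decide)
    have e5 := step_cons la lb [la,lb,la] _ e4 (by decide)
    have hp := Pababa []
    have hnil := P_nil
    simp only [psi, e5, h0, P_nil, List.length_cons, List.length_nil]
    push_cast; omega
  by_cases hy1 : y1 = lA
  case neg =>
    -- j = 0
    have e1 := step_cons la y1 L1 _ h0 (by simpa [lflip, la, lA] using hy1)
    have e2 := step_cons lb la _ _ e1 (by decide)
    have e3 := step_cons la lb _ _ e2 (by decide)
    have e4 := step_cons lb la _ _ e3 (by decide)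
    have e5 := step_cons la lb _ _ e4 (by decide)
    have hp := Pababa (y1 :: L1)
    have hnil := P_nil
    simp only [psi, e5, h0, List.length_cons]
    push_cast; omega
  subst hy1
  rcases h1 : L1 with _ | ⟨y2, L2⟩
  · -- x.toWord = [lA]
    have e1 : (FreeGroup.mk [la] * x).toWord = [] := by
      rw [step_cancel la [] x (by rw [h0, h1]; rfl)]
    have e2 := step_nil lb _ e1
    have e3 := step_cons la lb [] _ e2 (by decide)
    have e4 := step_cons lb la [lb] _ e3 (by decide)
    have e5 := step_cons la lb [la,lb] _ e4 (by decide)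
    have hp := Pabab []
    have hq := P_single lA
    have hnil := P_nil
    simp only [psi, e5, h0, h1, P_nil, List.length_cons, List.length_nil]
    push_cast; omega
  by_cases hy2 : y2 = lB
  case neg =>
    -- j = 1
    have e1 : (FreeGroup.mk [la] * x).toWord = y2 :: L2 := by
      rw [step_cancel la _ x (by rw [h0, h1]; rfl)]
    have e2 := step_cons lb y2 L2 _ e1 (by simpa [lflip, lb, lB] using hy2)
    have e3 := step_cons la lb _ _ e2 (by decide)
    have e4 := step_cons lb la _ _ e3 (by decide)
    have e5 := step_cons la lb _ _ e4 (by decide)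
    have hp := Pabab (y2 :: L2)
    have hq := P_le_cons lA (y2 :: L2)
    have hnil := P_nil
    simp only [psi, e5, h0, h1, List.length_cons]
    push_cast; omega
  subst hy2
  rcases h2 : L2 with _ | ⟨y3, L3⟩
  · -- x.toWord = [lA, lB]
    have e1 : (FreeGroup.mk [la] * x).toWord = [lB] := by
      rw [step_cancel la _ x (by rw [h0, h1, h2]; rfl)]
    have e2 : (FreeGroup.mk [lb] * (FreeGroup.mk [la] * x)).toWord = [] := by
      rw [step_cancel lb [] _ (by rw [e1]; rfl)]
    have e3 := step_nil la _ e2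
    have e4 := step_cons lb la [] _ e3 (by decide)
    have e5 := step_cons la lb [la] _ e4 (by decide)
    have hp : P [la, lb, la] = P [] := Paba_eq [] (by simp)
    have hq : (0:ℕ) ≤ P [lA, lB] := Nat.zero_le _
    have hnil := P_nil
    simp only [psi, e5, h0, h1, h2, P_nil, List.length_cons, List.length_nil]
    push_cast; omega
  have hy3 : y3 ≠ lb := by
    intro h
    exact toWord_reduced_pair x [lA] L3 false false
      (by rw [h0, h1, h2, h]; rfl)
  by_cases hy3A : y3 = lA
  case neg =>
    -- j = 2
    have e1 : (FreeGroup.mk [la] * x).toWord = lB :: y3 :: L3 := by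
      rw [step_cancel la _ x (by rw [h0, h1, h2]; rfl)]
    have e2 : (FreeGroup.mk [lb] * (FreeGroup.mk [la] * x)).toWord = y3 :: L3 := by
      rw [step_cancel lb _ _ (by rw [e1]; rfl)]
    have e3 := step_cons la y3 L3 _ e2 (by simpa [lflip, la, lA] using hy3A)
    have e4 := step_cons lb la _ _ e3 (by decide)
    have e5 := step_cons la lb _ _ e4 (by decide)
    have hp : P (la :: lb :: la :: y3 :: L3) = P (y3 :: L3) :=
      Paba_eq (y3 :: L3) (by simpa using hy3)
    have hq := P_le_cons lA (lB :: y3 :: L3)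
    have hq2 := P_le_cons lB (y3 :: L3)
    have hnil := P_nil
    simp only [psi, e5, h0, h1, h2, List.length_cons]
    push_cast; omega
  subst hy3A
  rcases h3 : L3 with _ | ⟨y4, L4⟩
  · -- x.toWord = [lA, lB, lA]
    have e1 : (FreeGroup.mk [la] * x).toWord = [lB, lA] := by
      rw [step_cancel la _ x (by rw [h0, h1, h2, h3]; rfl)]
    have e2 : (FreeGroup.mk [lb] * (FreeGroup.mk [la] * x)).toWord = [lA] := by
      rw [step_cancel lb _ _ (by rw [e1]; rfl)]
    have e3 : (FreeGroup.mk [la] * (FreeGroup.mk [lb] * (FreeGroup.mk [la] * x))).toWord = [] := by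
      rw [step_cancel la [] _ (by rw [e2]; rfl)]
    have e4 := step_nil lb _ e3
    have e5 := step_cons la lb [] _ e4 (by decide)
    have hp : P [la, lb] = P [] := Pab_eq [] (by simp)
    have hq : (0:ℕ) ≤ P [lA, lB, lA] := Nat.zero_le _
    have hnil := P_nil
    simp only [psi, e5, h0, h1, h2, h3, P_nil, List.length_cons, List.length_nil]
    push_cast; omega
  have hy4 : y4 ≠ la := by
    intro h
    exact toWord_reduced_pair x [lA, lB] L4 true false
      (by rw [h0, h1, h2, h3, h]; rfl)
  by_cases hy4B : y4 = lB
  case neg =>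
    -- j = 3
    have e1 : (FreeGroup.mk [la] * x).toWord = lB :: lA :: y4 :: L4 := by
      rw [step_cancel la _ x (by rw [h0, h1, h2, h3]; rfl)]
    have e2 : (FreeGroup.mk [lb] * (FreeGroup.mk [la] * x)).toWord = lA :: y4 :: L4 := by
      rw [step_cancel lb _ _ (by rw [e1]; rfl)]
    have e3 : (FreeGroup.mk [la] * (FreeGroup.mk [lb] * (FreeGroup.mk [la] * x))).toWord
        = y4 :: L4 := by
      rw [step_cancel la _ _ (by rw [e2]; rfl)]
    have e4 := step_cons lb y4 L4 _ e3 (by simpa [lflip, lb, lB] using hy4B)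
    have e5 := step_cons la lb _ _ e4 (by decide)
    have hp : P (la :: lb :: y4 :: L4) = P (y4 :: L4) :=
      Pab_eq (y4 :: L4) (by simpa using hy4)
    have hq := P_le_cons lA (lB :: lA :: y4 :: L4)
    have hq2 := P_le_cons lB (lA :: y4 :: L4)
    have hq3 := P_le_cons lA (y4 :: L4)
    have hnil := P_nil
    simp only [psi, e5, h0, h1, h2, h3, List.length_cons]
    push_cast; omega
  subst hy4B
  rcases h4 : L4 with _ | ⟨y5, L5⟩
  · -- x.toWord = [lA, lB, lA, lB]
    have e1 : (FreeGroup.mk [la] * x).toWord = [lB, lA, lB] := by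
      rw [step_cancel la _ x (by rw [h0, h1, h2, h3, h4]; rfl)]
    have e2 : (FreeGroup.mk [lb] * (FreeGroup.mk [la] * x)).toWord = [lA, lB] := by
      rw [step_cancel lb _ _ (by rw [e1]; rfl)]
    have e3 : (FreeGroup.mk [la] * (FreeGroup.mk [lb] * (FreeGroup.mk [la] * x))).toWord
        = [lB] := by
      rw [step_cancel la _ _ (by rw [e2]; rfl)]
    have e4 : (FreeGroup.mk [lb] * (FreeGroup.mk [la] * (FreeGroup.mk [lb] *
        (FreeGroup.mk [la] * x)))).toWord = [] := by
      rw [step_cancel lb [] _ (by rw [e3]; rfl)]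
    have e5 := step_nil la _ e4
    have hp := PABAB_ge []
    have hq := P_single la
    have hnil := P_nil
    simp only [psi, e5, h0, h1, h2, h3, h4, P_nil, List.length_cons, List.length_nil]
    push_cast; omega
  by_cases hy5 : y5 = lA
  case neg =>
    -- j = 4
    have hy5b : y5 ≠ lb := by
      intro h
      exact toWord_reduced_pair x [lA, lB, lA] L5 false false
        (by rw [h0, h1, h2, h3, h4, h]; rfl)
    have e1 : (FreeGroup.mk [la] * x).toWord = lB :: lA :: lB :: y5 :: L5 := by
      rw [step_cancel la _ x (by rw [h0, h1, h2, h3, h4]; rfl)]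
    have e2 : (FreeGroup.mk [lb] * (FreeGroup.mk [la] * x)).toWord = lA :: lB :: y5 :: L5 := by
      rw [step_cancel lb _ _ (by rw [e1]; rfl)]
    have e3 : (FreeGroup.mk [la] * (FreeGroup.mk [lb] * (FreeGroup.mk [la] * x))).toWord
        = lB :: y5 :: L5 := by
      rw [step_cancel la _ _ (by rw [e2]; rfl)]
    have e4 : (FreeGroup.mk [lb] * (FreeGroup.mk [la] * (FreeGroup.mk [lb] *
        (FreeGroup.mk [la] * x)))).toWord = y5 :: L5 := by
      rw [step_cancel lb _ _ (by rw [e3]; rfl)]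
    have e5 := step_cons la y5 L5 _ e4 (by simpa [lflip, la, lA] using hy5)
    have hp : P (la :: y5 :: L5) = P (y5 :: L5) :=
      Pa_eq (y5 :: L5) (by simpa using hy5b)
    have hq := PABAB_ge (y5 :: L5)
    have hnil := P_nil
    simp only [psi, e5, h0, h1, h2, h3, h4, List.length_cons]
    push_cast; omega
  subst hy5
  -- j = 5
  have e1 : (FreeGroup.mk [la] * x).toWord = lB :: lA :: lB :: lA :: L5 := by
    rw [step_cancel la _ x (by rw [h0, h1, h2, h3, h4]; rfl)]
  have e2 : (FreeGroup.mk [lb] * (FreeGroup.mk [la] * x)).toWord = lA :: lB :: lA :: L5 := by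
    rw [step_cancel lb _ _ (by rw [e1]; rfl)]
  have e3 : (FreeGroup.mk [la] * (FreeGroup.mk [lb] * (FreeGroup.mk [la] * x))).toWord
      = lB :: lA :: L5 := by
    rw [step_cancel la _ _ (by rw [e2]; rfl)]
  have e4 : (FreeGroup.mk [lb] * (FreeGroup.mk [la] * (FreeGroup.mk [lb] *
      (FreeGroup.mk [la] * x)))).toWord = lA :: L5 := by
    rw [step_cancel lb _ _ (by rw [e3]; rfl)]
  have e5 : (FreeGroup.mk [la] * (FreeGroup.mk [lb] * (FreeGroup.mk [la] *
      (FreeGroup.mk [lb] * (FreeGroup.mk [la] * x))))).toWord = L5 := by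
    rw [step_cancel la _ _ (by rw [e4]; rfl)]
  have hp := PABABA_ge L5
  have hnil := P_nil
  simp only [psi, e5, h0, h1, h2, h3, h4, List.length_cons]
  push_cast; omega

end BDA

namespace BDA
open FreeGroup

noncomputable def σ : F2 →* F2 := FreeGroup.lift (fun c => (FreeGroup.of c)⁻¹)

lemma σ_of (c : Bool) : σ (FreeGroup.of c) = (FreeGroup.of c)⁻¹ := FreeGroup.lift_apply_of

lemma inv_single (c : Bool) (s : Bool) :
    (FreeGroup.mk [(c, s)])⁻¹ = FreeGroup.mk [(c, !s)] := by
  rw [FreeGroup.inv_mk]; rfl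

lemma σ_mk_single (y : Λ) : σ (FreeGroup.mk [y]) = FreeGroup.mk [lflip y] := by
  rcases y with ⟨c, s⟩
  cases s
  · have h : FreeGroup.mk [(c, false)] = (FreeGroup.of c)⁻¹ := by
      rw [show (FreeGroup.of c) = FreeGroup.mk [(c, true)] from rfl, inv_single]
      norm_num
    rw [h, _root_.map_inv, σ_of, inv_inv]
    rfl
  · rw [show FreeGroup.mk [(c, true)] = FreeGroup.of c from rfl, σ_of,
      show (FreeGroup.of c) = FreeGroup.mk [(c, true)] from rfl, inv_single]
    norm_num [lflip]

lemma σ_mk (L : List Λ) : σ (FreeGroup.mk L) = FreeGroup.mk (L.map lflip) := by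
  induction L with
  | nil => simp only [List.map_nil, ← FreeGroup.one_eq_mk, _root_.map_one]
  | cons y t ih =>
    have h : FreeGroup.mk (y :: t) = FreeGroup.mk [y] * FreeGroup.mk t := by
      rw [FreeGroup.mul_mk]; rfl
    rw [h, _root_.map_mul, σ_mk_single, ih, FreeGroup.mul_mk]
    rfl

lemma lflip_lflip (y : Λ) : lflip (lflip y) = y := by
  rcases y with ⟨c, s⟩; cases s <;> rfl

lemma map_lflip_invol (L : List Λ) : (L.map lflip).map lflip = L := by
  rw [List.map_map]
  simp [Function.comp_def, lflip_lflip]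

lemma map_lflip_eq_iff (u v : List Λ) : u.map lflip = v ↔ u = v.map lflip :=
  ⟨fun h => by rw [← map_lflip_invol u, h], fun h => by rw [h, map_lflip_invol]⟩

lemma reduce_map (L : List Λ) :
    FreeGroup.reduce (L.map lflip) = (FreeGroup.reduce L).map lflip := by
  induction L with
  | nil => rfl
  | cons y t ih =>
    rw [List.map_cons, FreeGroup.reduce.cons, FreeGroup.reduce.cons, ih]
    cases h : FreeGroup.reduce t with
    | nil => rfl
    | cons hd tl =>
      rcases y with ⟨yc, ys⟩
      rcases hd with ⟨hc, hs⟩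
      by_cases hcc : yc = hc <;> cases ys <;> cases hs <;>
        simp [lflip, hcc]

lemma toWord_σ (x : F2) : (σ x).toWord = x.toWord.map lflip := by
  conv_lhs => rw [← FreeGroup.mk_toWord (x := x)]
  rw [σ_mk, FreeGroup.toWord_mk, reduce_map, FreeGroup.reduce_toWord]

lemma isF4_flip (u : List Λ) : isF4 (u.map lflip) ↔ isF4 u := by
  simp only [isF4, map_lflip_eq_iff]
  constructor <;> (rintro (h | h | h | h) <;> rw [h] <;> simp [lflip, la, lb, lA, lB])

lemma isF5_flip (u : List Λ) : isF5 (u.map lflip) ↔ isF5 u := by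
  simp only [isF5, map_lflip_eq_iff]
  constructor <;> (rintro (h | h) <;> rw [h] <;> simp [lflip, la, lb, lA, lB])

lemma P_flip (L : List Λ) : P (L.map lflip) = P L := by
  match L with
  | [] => rfl
  | c :: t =>
    have ih1 := P_flip t
    have ih2 := P_flip (t.drop 3)
    have ih3 := P_flip (t.drop 4)
    rw [List.map_cons, P_cons, P_cons (c := c)]
    simp only [← List.map_take, ← List.map_drop, ← List.map_cons,
      isF4_flip, isF5_flip, ih1, ih2, ih3]
termination_by L.length
decreasing_by
  all_goals (simp only [List.length_cons, List.length_drop]; omega)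

end BDA

namespace BDA
open FreeGroup

lemma σ_invol (x : F2) : σ (σ x) = x := by
  have h : σ.comp σ = MonoidHom.id F2 := by
    apply FreeGroup.ext_hom
    intro c
    simp [σ_of, _root_.map_inv]
  calc σ (σ x) = (σ.comp σ) x := rfl
    _ = x := by rw [h]; rfl

lemma psi_σ (x : F2) : psi (σ x) = psi x := by
  simp [psi, toWord_σ, P_flip]

lemma σ_w : σ wγ = wγ⁻¹ := by
  rw [wγ]
  simp only [_root_.map_mul, F2Gen.a, F2Gen.b, σ_of]
  group

lemma psi_winv (x : F2) : psi x - 1 ≤ psi (wγ⁻¹ * x) := by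
  have h : wγ⁻¹ * x = σ (wγ * σ x) := by
    rw [_root_.map_mul, σ_w, σ_invol]
  rw [h, psi_σ]
  calc psi x - 1 = psi (σ x) - 1 := by rw [psi_σ]
    _ ≤ psi (wγ * σ x) := psi_w _

lemma psi_step {s : F2} (hs : s ∈ Sγ) (x : F2) : psi x - 1 ≤ psi (s * x) := by
  rcases hs with h | h | h | h | h | h <;> subst h
  · exact a_def ▸ (psi_letter true true x).1
  · exact ainv_def ▸ (psi_letter true false x).1
  · exact b_def ▸ (psi_letter false true x).1
  · exact binv_def ▸ (psi_letter false false x).1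
  · exact psi_w x
  · exact psi_winv x

lemma psi_step_up {s : F2} (hs : s ∈ Sγ) (x : F2) : psi (s * x) ≤ psi x + 1 := by
  have h := psi_step (S_inv hs) (s * x)
  rw [inv_mul_cancel_left] at h
  omega

lemma psi_prod_le (l : List F2) (h : ∀ s ∈ l, s ∈ Sγ) : psi l.prod ≤ l.length := by
  induction l with
  | nil => simp [psi_one]
  | cons s t ih =>
    rw [List.prod_cons]
    have h1 := psi_step_up (h s (by simp)) t.prod
    have h2 := ih (fun x hx => h x (by simp [hx]))
    simp only [List.length_cons]
    push_cast
    omega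

lemma psi_le_wlen (x : F2) : psi x ≤ (wlen Sγ x : ℤ) := by
  obtain ⟨l, hS, hlen, hprod⟩ := wlen_spec x
  calc psi x = psi l.prod := by rw [hprod]
    _ ≤ l.length := psi_prod_le l hS
    _ = wlen Sγ x := by rw [hlen]

lemma wγ_mk : wγ = FreeGroup.mk [la,lb,la,lb,la] := by
  rw [wγ]
  simp only [a_def, b_def, FreeGroup.mul_mk]
  rfl

lemma wγinv_mk : wγ⁻¹ = FreeGroup.mk [lA,lB,lA,lB,lA] := by
  rw [wγ_mk, FreeGroup.inv_mk]
  rfl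

lemma wlen_one : wlen Sγ 1 = 0 :=
  Nat.le_zero.mp (wlen_le (l := []) (by simp) (by simp))

lemma isF4_len {f : List Λ} (h : isF4 f) : f.length = 4 := by
  rcases h with h | h | h | h <;> subst h <;> rfl

lemma isF5_len {f : List Λ} (h : isF5 f) : f.length = 5 := by
  rcases h with h | h <;> subst h <;> rfl

lemma wlen_F4 {f : List Λ} (h : isF4 f) : wlen Sγ (FreeGroup.mk f) ≤ 2 := by
  rcases h with h | h | h | h <;> subst h
  · refine wlen_le (l := [wγ, a⁻¹]) ?_ ?_
    · intro s hs
      simp only [List.mem_cons, List.not_mem_nil, or_false] at hs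
      rcases hs with rfl | rfl
      · exact S_mem_w
      · exact S_mem_ainv
    · show wγ * (a⁻¹ * 1) = _
      rw [mul_one, wγ_mk, ainv_def, FreeGroup.mul_mk]
      exact FreeGroup.reduce.exact (by decide)
  · refine wlen_le (l := [a⁻¹, wγ]) ?_ ?_
    · intro s hs
      simp only [List.mem_cons, List.not_mem_nil, or_false] at hs
      rcases hs with rfl | rfl
      · exact S_mem_ainv
      · exact S_mem_w
    · show a⁻¹ * (wγ * 1) = _
      rw [mul_one, wγ_mk, ainv_def, FreeGroup.mul_mk]
      exact FreeGroup.reduce.exact (by decide)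
  · refine wlen_le (l := [wγ⁻¹, a]) ?_ ?_
    · intro s hs
      simp only [List.mem_cons, List.not_mem_nil, or_false] at hs
      rcases hs with rfl | rfl
      · exact S_mem_winv
      · exact S_mem_a
    · show wγ⁻¹ * (a * 1) = _
      rw [mul_one, wγinv_mk, a_def, FreeGroup.mul_mk]
      exact FreeGroup.reduce.exact (by decide)
  · refine wlen_le (l := [a, wγ⁻¹]) ?_ ?_
    · intro s hs
      simp only [List.mem_cons, List.not_mem_nil, or_false] at hs
      rcases hs with rfl | rfl
      · exact S_mem_a
      · exact S_mem_winv
    · show a * (wγ⁻¹ * 1) = _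
      rw [mul_one, wγinv_mk, a_def, FreeGroup.mul_mk]
      exact FreeGroup.reduce.exact (by decide)

lemma wlen_F5 {f : List Λ} (h : isF5 f) : wlen Sγ (FreeGroup.mk f) ≤ 1 := by
  rcases h with h | h <;> subst h
  · exact le_trans (wlen_le (l := [wγ]) (by simpa using S_mem_w)
      (by simpa using wγ_mk)) (by norm_num)
  · exact le_trans (wlen_le (l := [wγ⁻¹]) (by simpa using S_mem_winv)
      (by simpa using wγinv_mk)) (by norm_num)

lemma wlen_mk_ub (L : List Λ) : wlen Sγ (FreeGroup.mk L) + 2 * P L ≤ L.length := by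
  match L with
  | [] =>
    rw [P_nil, ← FreeGroup.one_eq_mk, wlen_one]
    simp
  | c :: t =>
    have ih1 := wlen_mk_ub t
    have bound1 : wlen Sγ (FreeGroup.mk (c :: t)) ≤ 1 + wlen Sγ (FreeGroup.mk t) := by
      have h : FreeGroup.mk (c :: t) = FreeGroup.mk [c] * FreeGroup.mk t := by
        rw [FreeGroup.mul_mk]; rfl
      rw [h]
      exact le_trans (wlen_mul_le _ _) (by
        have := wlen_S_le (mk_single_mem c); omega)
    have hA : wlen Sγ (FreeGroup.mk (c :: t)) + 2 * P t ≤ t.length + 1 := by omega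
    have hB : wlen Sγ (FreeGroup.mk (c :: t)) +
        2 * (if isF4 (c :: t.take 3) then 1 + P (t.drop 3) else 0) ≤ t.length + 1 := by
      split
      · next h4 =>
        have hlen : (c :: t.take 3).length = 4 := isF4_len h4
        have htl : 3 ≤ t.length := by
          simp only [List.length_cons, List.length_take] at hlen
          omega
        have key : FreeGroup.mk (c :: t) =
            FreeGroup.mk (c :: t.take 3) * FreeGroup.mk (t.drop 3) := by
          rw [FreeGroup.mul_mk]
          congr 1
          simp [List.take_append_drop]
        have ih2 := wlen_mk_ub (t.drop 3)
        have b2 : wlen Sγ (FreeGroup.mk (c :: t)) ≤ 2 + wlen Sγ (FreeGroup.mk (t.drop 3)) := by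
          rw [key]
          exact le_trans (wlen_mul_le _ _) (by have := wlen_F4 h4; omega)
        have hd : (t.drop 3).length = t.length - 3 := by simp
        omega
      · omega
    have hC : wlen Sγ (FreeGroup.mk (c :: t)) +
        2 * (if isF5 (c :: t.take 4) then 2 + P (t.drop 4) else 0) ≤ t.length + 1 := by
      split
      · next h5 =>
        have hlen : (c :: t.take 4).length = 5 := isF5_len h5
        have htl : 4 ≤ t.length := by
          simp only [List.length_cons, List.length_take] at hlen
          omega
        have key : FreeGroup.mk (c :: t) =
            FreeGroup.mk (c :: t.take 4) * FreeGroup.mk (t.drop 4) := by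
          rw [FreeGroup.mul_mk]
          congr 1
          simp [List.take_append_drop]
        have ih2 := wlen_mk_ub (t.drop 4)
        have b2 : wlen Sγ (FreeGroup.mk (c :: t)) ≤ 1 + wlen Sγ (FreeGroup.mk (t.drop 4)) := by
          rw [key]
          exact le_trans (wlen_mul_le _ _) (by have := wlen_F5 h5; omega)
        have hd : (t.drop 4).length = t.length - 4 := by simp
        omega
      · omega
    rw [P_cons]
    rcases max_choice (P t) (max
      (if isF4 (c :: t.take 3) then 1 + P (t.drop 3) else 0)
      (if isF5 (c :: t.take 4) then 2 + P (t.drop 4) else 0)) with h | h <;> rw [h]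
    · simpa using hA
    · rcases max_choice
        (if isF4 (c :: t.take 3) then 1 + P (t.drop 3) else 0)
        (if isF5 (c :: t.take 4) then 2 + P (t.drop 4) else 0) with h' | h' <;> rw [h']
      · simpa using hB
      · simpa using hC
termination_by L.length
decreasing_by
  all_goals (simp only [List.length_cons, List.length_drop]; omega)

lemma wlen_formula (x : F2) :
    (wlen Sγ x : ℤ) = (x.toWord.length : ℤ) - 2 * P x.toWord := by
  have h1 := psi_le_wlen x
  have h2 := wlen_mk_ub x.toWord
  rw [FreeGroup.mk_toWord] at h2
  unfold psi at h1
  omega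

end BDA

namespace BDA
open FreeGroup

lemma P_pair (y z : Λ) : P [y, z] = 0 := by
  rw [P_skip, P_single] <;> simp [isF4, isF5]

lemma σ_a : σ a = a⁻¹ := σ_of true
lemma σ_b : σ b = b⁻¹ := σ_of false

lemma σ_S {u : F2} (hu : u ∈ Sγ) : σ u ∈ Sγ := by
  rcases hu with h | h | h | h | h | h <;> subst h
  · rw [σ_a]; exact S_mem_ainv
  · rw [_root_.map_inv, σ_a, inv_inv]; exact S_mem_a
  · rw [σ_b]; exact S_mem_binv
  · rw [_root_.map_inv, σ_b, inv_inv]; exact S_mem_b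
  · rw [σ_w]; exact S_mem_winv
  · rw [_root_.map_inv, σ_w, inv_inv]; exact S_mem_w

lemma wlen_σ_le (x : F2) : wlen Sγ (σ x) ≤ wlen Sγ x := by
  obtain ⟨l, hS, hlen, hprod⟩ := wlen_spec x
  refine le_trans (wlen_le (l := l.map σ) ?_ ?_) (by simp [hlen])
  · intro s hs
    obtain ⟨u, hu, rfl⟩ := List.mem_map.mp hs
    exact σ_S (hS u hu)
  · rw [← map_list_prod σ l, hprod]

lemma wlen_σ (x : F2) : wlen Sγ (σ x) = wlen Sγ x := by
  refine le_antisymm (wlen_σ_le x) ?_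
  have h := wlen_σ_le (σ x)
  rwa [σ_invol] at h

lemma main1 : ∀ g : F2, (∃ l : List F2, (∀ x ∈ l, x ∈ Sγ) ∧ l.prod = g ∧
      l.length = wlen Sγ g ∧ l.take 3 = [b, a, a]) →
    ¬ ∃ l' : List F2, (∀ x ∈ l', x ∈ Sγ) ∧ l'.prod = g ∧
      l'.length = wlen Sγ g ∧ l'.head? = some a⁻¹ := by
  rintro g ⟨l, hlS, hlprod, hllen, hltake⟩ ⟨l', hS', hprod', hlen', hhead'⟩
  -- decompose l = b :: a :: a :: t
  obtain ⟨t, rfl⟩ : ∃ t, l = b :: a :: a :: t := by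
    rcases l with _ | ⟨c1, l⟩; · simp at hltake
    rcases l with _ | ⟨c2, l⟩; · simp [List.take] at hltake
    rcases l with _ | ⟨c3, l⟩; · simp [List.take] at hltake
    simp only [List.take, List.cons.injEq] at hltake
    obtain ⟨rfl, rfl, rfl, -⟩ := hltake
    exact ⟨l, rfl⟩
  set p := t.prod with hp_def
  set k := t.length with hk_def
  have hpS : ∀ x ∈ t, x ∈ Sγ := fun x hx => hlS x (by simp [hx])
  have hg : g = b * (a * (a * p)) := by
    rw [← hlprod]; simp [List.prod_cons, mul_assoc]; rfl
  have hn : wlen Sγ g = k + 3 := by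
    rw [← hllen]; simp only [List.length_cons, hk_def]
  have hp_le : wlen Sγ p ≤ k := wlen_le hpS rfl
  have hg_le : wlen Sγ g ≤ 3 + wlen Sγ p := by
    rw [hg]
    calc wlen Sγ (b * (a * (a * p))) ≤ wlen Sγ b + wlen Sγ (a * (a * p)) := wlen_mul_le _ _
      _ ≤ wlen Sγ b + (wlen Sγ a + wlen Sγ (a * p)) := by
          have := wlen_mul_le a (a * p); omega
      _ ≤ wlen Sγ b + (wlen Sγ a + (wlen Sγ a + wlen Sγ p)) := by
          have := wlen_mul_le a p; omega
      _ ≤ 3 + wlen Sγ p := by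
          have h1 := wlen_S_le S_mem_a
          have h2 := wlen_S_le S_mem_b
          omega
  have hp_eq : wlen Sγ p = k := by omega
  -- decompose l'
  rcases l' with _ | ⟨c0, t'⟩
  · simp at hhead'
  have hc0 : c0 = a⁻¹ := by simpa using hhead'
  subst hc0
  have hag : t'.prod = a * g := by
    have h : a⁻¹ * t'.prod = g := by simpa [List.prod_cons] using hprod'
    rw [← h, mul_inv_cancel_left]
  have hag_le : wlen Sγ (a * g) ≤ k + 2 := by
    have h1 : wlen Sγ (a * g) ≤ t'.length :=
      wlen_le (fun x hx => hS' x (by simp [hx])) hag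
    have h2 : t'.length + 1 = k + 3 := by
      have := hlen'
      simp only [List.length_cons] at this
      omega
    omega
  have hag_ge : k + 3 ≤ 1 + wlen Sγ (a * g) := by
    calc k + 3 = wlen Sγ g := hn.symm
      _ = wlen Sγ (a⁻¹ * (a * g)) := by rw [inv_mul_cancel_left]
      _ ≤ wlen Sγ a⁻¹ + wlen Sγ (a * g) := wlen_mul_le _ _
      _ ≤ 1 + wlen Sγ (a * g) := by have := wlen_S_le S_mem_ainv; omega
  have hag_eq : wlen Sγ (a * g) = k + 2 := by omega
  -- formulas
  have F1 : (wlen Sγ p : ℤ) = (p.toWord.length : ℤ) - 2 * P p.toWord := wlen_formula p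
  have hgmk : g = FreeGroup.mk [lb] * (FreeGroup.mk [la] * (FreeGroup.mk [la] * p)) := by
    rw [hg, a_def, b_def]
  have hagmk : a * g = FreeGroup.mk [la] * g := by rw [a_def]
  have F2 : (wlen Sγ g : ℤ) = (g.toWord.length : ℤ) - 2 * P g.toWord := wlen_formula g
  have F3 : (wlen Sγ (a * g) : ℤ) =
      ((a * g).toWord.length : ℤ) - 2 * P (a * g).toWord := wlen_formula (a * g)
  rcases h0 : p.toWord with _ | ⟨y1, L1⟩
  · -- p has empty word
    have e1 := step_nil la p h0
    have e2 := step_cons la la [] _ e1 (by decide)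
    have e3 := step_cons lb la [la] _ e2 (by decide)
    have hgw : g.toWord = [lb, la, la] := by rw [hgmk]; exact e3
    have eaw : (a * g).toWord = [la, lb, la, la] := by
      rw [hagmk]; exact step_cons la lb [la, la] g hgw (by decide)
    have hPg : P [lb, la, la] = P [la] := Pbaa_eq []
    have hPag : P [la, lb, la, la] = P [la] := Pabaa_eq []
    have hPa := P_single la
    rw [hgw, hPg] at F2
    rw [eaw, hPag] at F3
    rw [hn] at F2
    rw [hag_eq] at F3
    simp only [List.length_cons, List.length_nil] at F2 F3
    omega
  by_cases hy1 : y1 = lA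
  case neg =>
    -- no cancellation
    have e1 := step_cons la y1 L1 _ h0 (by simpa [lflip, la, lA] using hy1)
    have e2 := step_cons la la _ _ e1 (by decide)
    have e3 := step_cons lb la _ _ e2 (by decide)
    have hgw : g.toWord = lb :: la :: la :: y1 :: L1 := by rw [hgmk]; exact e3
    have eaw : (a * g).toWord = la :: lb :: la :: la :: y1 :: L1 := by
      rw [hagmk]; exact step_cons la lb _ g hgw (by decide)
    have hPg : P (lb :: la :: la :: y1 :: L1) = P (la :: y1 :: L1) := Pbaa_eq _
    have hPag : P (la :: lb :: la :: la :: y1 :: L1) = P (la :: y1 :: L1) := Pabaa_eq _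
    rw [hgw, hPg, hn] at F2
    rw [eaw, hPag, hag_eq] at F3
    simp only [List.length_cons] at F2 F3
    push_cast at F2 F3
    omega
  subst hy1
  rcases h1 : L1 with _ | ⟨y2, L2⟩
  · -- p.toWord = [lA]
    have e1 : (FreeGroup.mk [la] * p).toWord = [] := by
      rw [step_cancel la [] p (by rw [h0, h1]; rfl)]
    have e2 := step_nil la _ e1
    have e3 := step_cons lb la [] _ e2 (by decide)
    have hgw : g.toWord = [lb, la] := by rw [hgmk]; exact e3
    have hPg : P [lb, la] = 0 := P_pair _ _
    rw [hgw, hPg, hn] at F2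
    simp only [List.length_cons, List.length_nil] at F2
    omega
  by_cases hy2 : y2 = lA
  case neg =>
    -- single cancellation
    have hy2a : y2 ≠ la := by
      intro h
      exact toWord_reduced_pair p [] L2 true false (by rw [h0, h1, h]; rfl)
    have e1 : (FreeGroup.mk [la] * p).toWord = y2 :: L2 := by
      rw [step_cancel la _ p (by rw [h0, h1]; rfl)]
    have e2 := step_cons la y2 L2 _ e1 (by simpa [lflip, la, lA] using hy2)
    have e3 := step_cons lb la _ _ e2 (by decide)
    have hgw : g.toWord = lb :: la :: y2 :: L2 := by rw [hgmk]; exact e3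
    by_cases hy2B : y2 = lB
    · subst hy2B
      have eaw : (a * g).toWord = la :: lb :: la :: lB :: L2 := by
        rw [hagmk]; exact step_cons la lb _ g hgw (by decide)
      have hPg : P (lb :: la :: lB :: L2) = P (lB :: L2) := Pbal_eq _
      have hPag : P (la :: lb :: la :: lB :: L2) = P (lB :: L2) := Pabal_eq _
      rw [hgw, hPg, hn] at F2
      rw [eaw, hPag, hag_eq] at F3
      simp only [List.length_cons] at F2 F3
      push_cast at F2 F3
      omega
    · -- y2 ∉ {lA, la, lB}
      have hPp : P (lA :: y2 :: L2) = P (y2 :: L2) := PA_eq _ (by simpa using hy2B)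
      have hb1 := P_le_cons la (y2 :: L2)
      have hb2 := P_le_cons lb (la :: y2 :: L2)
      rw [h0, h1, hPp, hp_eq] at F1
      rw [hgw, hn] at F2
      simp only [List.length_cons] at F1 F2
      push_cast at F1 F2
      omega
  subst hy2
  rcases h2 : L2 with _ | ⟨y3, L3⟩
  · -- p.toWord = [lA, lA]
    have e1 : (FreeGroup.mk [la] * p).toWord = [lA] := by
      rw [step_cancel la _ p (by rw [h0, h1, h2]; rfl)]
    have e2 : (FreeGroup.mk [la] * (FreeGroup.mk [la] * p)).toWord = [] := by
      rw [step_cancel la [] _ (by rw [e1]; rfl)]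
    have e3 := step_nil lb _ e2
    have hgw : g.toWord = [lb] := by rw [hgmk]; exact e3
    rw [hgw, P_single, hn] at F2
    simp only [List.length_cons, List.length_nil] at F2
    omega
  by_cases hy3 : y3 = lB
  case neg =>
    -- double cancellation, g.toWord = lb :: y3 :: L3
    have hy3a : y3 ≠ la := by
      intro h
      exact toWord_reduced_pair p [lA] L3 true false (by rw [h0, h1, h2, h]; rfl)
    have e1 : (FreeGroup.mk [la] * p).toWord = lA :: y3 :: L3 := by
      rw [step_cancel la _ p (by rw [h0, h1, h2]; rfl)]
    have e2 : (FreeGroup.mk [la] * (FreeGroup.mk [la] * p)).toWord = y3 :: L3 := by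
      rw [step_cancel la _ _ (by rw [e1]; rfl)]
    have e3 := step_cons lb y3 L3 _ e2 (by simpa [lflip, lb, lB] using hy3)
    have hgw : g.toWord = lb :: y3 :: L3 := by rw [hgmk]; exact e3
    have hPp : P (lA :: lA :: y3 :: L3) = P (y3 :: L3) := PAA_eq _ (by simpa using hy3)
    have hb1 := P_le_cons lb (y3 :: L3)
    rw [h0, h1, h2, hPp, hp_eq] at F1
    rw [hgw, hn] at F2
    simp only [List.length_cons] at F1 F2
    push_cast at F1 F2
    omega
  subst hy3
  -- triple cancellation: g.toWord = L3
  have e1 : (FreeGroup.mk [la] * p).toWord = lA :: lB :: L3 := by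
    rw [step_cancel la _ p (by rw [h0, h1, h2]; rfl)]
  have e2 : (FreeGroup.mk [la] * (FreeGroup.mk [la] * p)).toWord = lB :: L3 := by
    rw [step_cancel la _ _ (by rw [e1]; rfl)]
  have e3 : (FreeGroup.mk [lb] * (FreeGroup.mk [la] * (FreeGroup.mk [la] * p))).toWord
      = L3 := by
    rw [step_cancel lb _ _ (by rw [e2]; rfl)]
  have hgw : g.toWord = L3 := by rw [hgmk]; exact e3
  have hPp := PAAB_le L3
  rw [h0, h1, h2, hp_eq] at F1
  rw [hgw, hn] at F2
  simp only [List.length_cons] at F1 F2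
  push_cast at F1 F2
  omega

end BDA

theorem b_double_a_lemma' :
    (∀ g : F2, (∃ l : List F2, (∀ x ∈ l, x ∈ Sγ) ∧ l.prod = g ∧
        l.length = wlen Sγ g ∧ l.take 3 = [b, a, a]) →
      ¬ ∃ l' : List F2, (∀ x ∈ l', x ∈ Sγ) ∧ l'.prod = g ∧
        l'.length = wlen Sγ g ∧ l'.head? = some a⁻¹) ∧
    (∀ g' : F2, (∃ l : List F2, (∀ x ∈ l, x ∈ Sγ) ∧ l.prod = g' ∧
        l.length = wlen Sγ g' ∧ l.take 3 = [b⁻¹, a⁻¹, a⁻¹]) →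
      ¬ ∃ l' : List F2, (∀ x ∈ l', x ∈ Sγ) ∧ l'.prod = g' ∧
        l'.length = wlen Sγ g' ∧ l'.head? = some a) := by
  constructor
  · exact BDA.main1
  · rintro g' ⟨l, hS, hprod, hlen, htake⟩ ⟨l', hS', hprod', hlen', hhead'⟩
    refine BDA.main1 (BDA.σ g') ⟨l.map BDA.σ, ?_, ?_, ?_, ?_⟩
      ⟨l'.map BDA.σ, ?_, ?_, ?_, ?_⟩
    · intro x hx
      obtain ⟨u, hu, rfl⟩ := List.mem_map.mp hx
      exact BDA.σ_S (hS u hu)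
    · rw [← map_list_prod, hprod]
    · rw [List.length_map, hlen, BDA.wlen_σ]
    · rw [← List.map_take, htake]
      simp [_root_.map_inv, BDA.σ_a, BDA.σ_b]
    · intro x hx
      obtain ⟨u, hu, rfl⟩ := List.mem_map.mp hx
      exact BDA.σ_S (hS' u hu)
    · rw [← map_list_prod, hprod']
    · rw [List.length_map, hlen', BDA.wlen_σ]
    · rw [List.head?_map, hhead', Option.map_some, BDA.σ_a]


/-- If `g ∈ F₂` has a geodesic spelling (w.r.t. `S_γ`) whose first three letters are
`b, a, a`, then `g` has no geodesic spelling whose first letter is `a⁻¹`; similarly,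
if `g'` has a geodesic spelling starting with `b⁻¹, a⁻¹, a⁻¹`, then `g'` has no
geodesic spelling starting with `a`. -/
theorem b_double_a_lemma :
    (∀ g : F2, (∃ l : List F2, (∀ x ∈ l, x ∈ Sγ) ∧ l.prod = g ∧
        l.length = wlen Sγ g ∧ l.take 3 = [b, a, a]) →
      ¬ ∃ l' : List F2, (∀ x ∈ l', x ∈ Sγ) ∧ l'.prod = g ∧
        l'.length = wlen Sγ g ∧ l'.head? = some a⁻¹) ∧
    (∀ g' : F2, (∃ l : List F2, (∀ x ∈ l, x ∈ Sγ) ∧ l.prod = g' ∧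
        l.length = wlen Sγ g' ∧ l.take 3 = [b⁻¹, a⁻¹, a⁻¹]) →
      ¬ ∃ l' : List F2, (∀ x ∈ l', x ∈ Sγ) ∧ l'.prod = g' ∧
        l'.length = wlen Sγ g' ∧ l'.head? = some a) :=
  b_double_a_lemma'
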